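/- Fix nonnegative integers a,b,c with a ≤ c ≤ 2a, and nonnegative integers x,y. Let m(x,y) be the number of integer triples (d,e,f) with 0≤d≤2a-c, 0≤e≤b, 0≤f, d-e+f = x-b, e+f = y. Let n(x,y) be the number of integers α satisfying all of: a-⌊c/2⌋-(c mod 2) ≤ α, α ≤ ⌊c/2⌋+y, ⌊c/2⌋ ≤ α, α ≤ b+⌊c/2⌋, (-x+y+b+c-(c mod 2)+ε)/2 ≤ α ≤ -ε̲+(-x+y+2a+b-2·(c mod 2)+ε)/2, and (-x+y+2a+b-c-(c mod 2)+ε)/2 ≤ α, where ε ∈ {0,1} is determined by ε ≡ x+y+b (mod 2), and ε̲ = ε if c is even and 0 if c is odd. Then m(x,y) = n(x,y). -/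
import Mathlib


/-- `mcount a b c x y`: number of integer triples `(d,e,f)` with `0 ≤ d ≤ 2a−c`,
`0 ≤ e ≤ b`, `0 ≤ f`, `d − e + f = x − b`, `e + f = y`. -/
noncomputable def mcount (a b c x y : ℕ) : ℕ :=
  Set.ncard {t : ℤ × ℤ × ℤ |
    0 ≤ t.1 ∧ t.1 ≤ 2 * (a : ℤ) - c ∧ 0 ≤ t.2.1 ∧ t.2.1 ≤ (b : ℤ) ∧ 0 ≤ t.2.2 ∧
    t.1 - t.2.1 + t.2.2 = (x : ℤ) - b ∧ t.2.1 + t.2.2 = (y : ℤ)}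

/-- `ncount a b c x y`: number of integers `α` in the intersection of the listed intervals,
where `ε ∈ {0,1}` has the parity of `x+y+b` and `ε̲ = ε` if `c` is even, `0` if `c` is odd.
Inequalities with denominator 2 are stated in doubled (integral) form. -/
noncomputable def ncount (a b c x y : ℕ) : ℕ :=
  Set.ncard {α : ℤ |
    let ε : ℤ := ((x : ℤ) + y + b) % 2
    let εbar : ℤ := if (c : ℤ) % 2 = 0 then ε else 0
    (a : ℤ) - (c : ℤ) / 2 - (c : ℤ) % 2 ≤ α ∧
    α ≤ (c : ℤ) / 2 + y ∧
    (c : ℤ) / 2 ≤ α ∧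
    α ≤ (b : ℤ) + (c : ℤ) / 2 ∧
    -(x : ℤ) + y + b + c - (c : ℤ) % 2 + ε ≤ 2 * α ∧
    2 * α ≤ 2 * (-εbar) + (-(x : ℤ) + y + 2 * a + b - 2 * ((c : ℤ) % 2) + ε) ∧
    -(x : ℤ) + y + 2 * a + b - c - (c : ℤ) % 2 + ε ≤ 2 * α}

/-- The two coefficient counts agree: `m(x,y) = n(x,y)` for `a ≤ c ≤ 2a`. -/
theorem mcount_eq_ncount (a b c x y : ℕ) (h1 : a ≤ c) (h2 : c ≤ 2 * a) :
    mcount a b c x y = ncount a b c x y := by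
  unfold mcount ncount
  have hkey : {t : ℤ × ℤ × ℤ |
    0 ≤ t.1 ∧ t.1 ≤ 2 * (a : ℤ) - c ∧ 0 ≤ t.2.1 ∧ t.2.1 ≤ (b : ℤ) ∧ 0 ≤ t.2.2 ∧
    t.1 - t.2.1 + t.2.2 = (x : ℤ) - b ∧ t.2.1 + t.2.2 = (y : ℤ)} =
    (fun α : ℤ => ((x:ℤ) - b - y + 2*α - 2*((c:ℤ)/2), α - (c:ℤ)/2, (y:ℤ) - α + (c:ℤ)/2)) ''
    {α : ℤ |
    let ε : ℤ := ((x : ℤ) + y + b) % 2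
    let εbar : ℤ := if (c : ℤ) % 2 = 0 then ε else 0
    (a : ℤ) - (c : ℤ) / 2 - (c : ℤ) % 2 ≤ α ∧
    α ≤ (c : ℤ) / 2 + y ∧
    (c : ℤ) / 2 ≤ α ∧
    α ≤ (b : ℤ) + (c : ℤ) / 2 ∧
    -(x : ℤ) + y + b + c - (c : ℤ) % 2 + ε ≤ 2 * α ∧
    2 * α ≤ 2 * (-εbar) + (-(x : ℤ) + y + 2 * a + b - 2 * ((c : ℤ) % 2) + ε) ∧
    -(x : ℤ) + y + 2 * a + b - c - (c : ℤ) % 2 + ε ≤ 2 * α} := by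
    ext ⟨d, e, f⟩
    simp only [Set.mem_setOf_eq, Set.mem_image, Prod.mk.injEq]
    have hc2 : (c:ℤ) % 2 = 0 ∨ (c:ℤ) % 2 = 1 := Int.emod_two_eq _
    have hε : ((x:ℤ) + y + b) % 2 = 0 ∨ ((x:ℤ) + y + b) % 2 = 1 := Int.emod_two_eq _
    rcases hc2 with hc | hc <;>
      simp only [hc, reduceIte] <;>
      constructor
    · rintro ⟨p1, p2, p3, p4, p5, p6, p7⟩
      exact ⟨e + (c:ℤ)/2, by constructor <;> omega, by omega⟩
    · rintro ⟨α, ⟨q1, q2, q3, q4, q5, q6, q7⟩, hd, he, hf⟩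
      omega
    · rintro ⟨p1, p2, p3, p4, p5, p6, p7⟩
      exact ⟨e + (c:ℤ)/2, by constructor <;> omega, by omega⟩
    · rintro ⟨α, ⟨q1, q2, q3, q4, q5, q6, q7⟩, hd, he, hf⟩
      omega
  rw [hkey]
  apply Set.ncard_image_of_injective
  intro α β h
  have := congrArg (fun t : ℤ × ℤ × ℤ => t.2.1) h
  simpa using this
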